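/- arXiv:2602.05614 — 3 statements merged into one kernel-verified Lean document; each statement's English description precedes it below -/
import Mathlib

section
/- Let t, K₀ be positive reals with K₀ > 1, let m, r, K be positive integers with r ≥ 2 and K ≥ 2 and K ≥ K₀, and define g(x) = (t/(2π))·(log(Kr + m + x) − log(Kr + x)) for x ≥ 0, and W = π(r+1)³K³/t. Then for all real x with 0 ≤ x ≤ K − m (assuming m < K), the second derivative satisfies m/W ≤ g''(x) ≤ (m/W)·((r+1)/r)³. -/
open Real

theorem stmt_8 (t K₀ : ℝ) (ht : 0 < t) (hK₀ : 1 < K₀)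
    (m r K : ℕ) (hm : 0 < m) (hr : 2 ≤ r) (hK2 : 2 ≤ K) (hKK₀ : (K : ℝ) ≥ K₀)
    (hmK : m < K)
    (g : ℝ → ℝ)
    (hg : g = fun x => (t / (2 * π)) * (Real.log ((K : ℝ) * r + m + x) - Real.log ((K : ℝ) * r + x)))
    (W : ℝ) (hW : W = π * ((r : ℝ) + 1) ^ 3 * (K : ℝ) ^ 3 / t) :
    ∀ x : ℝ, 0 ≤ x → x ≤ (K : ℝ) - m →
      (m : ℝ) / W ≤ deriv (deriv g) x ∧
      deriv (deriv g) x ≤ ((m : ℝ) / W) * (((r : ℝ) + 1) / r) ^ 3 := by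
  intro x hx0 hxK
  have hπ : (0:ℝ) < π := Real.pi_pos
  have hK : (2:ℝ) ≤ (K:ℝ) := by exact_mod_cast hK2
  have hr' : (2:ℝ) ≤ (r:ℝ) := by exact_mod_cast hr
  have hm' : (1:ℝ) ≤ (m:ℝ) := by exact_mod_cast hm
  have hmK' : (m:ℝ) < (K:ℝ) := by exact_mod_cast hmK
  have hB : (0:ℝ) < (K:ℝ) * r := by nlinarith
  set c : ℝ := t / (2 * π) with hc
  set B : ℝ := (K:ℝ) * r with hBdef
  set A : ℝ := (K:ℝ) * r + m with hAdef
  have hAB : B < A := by rw [hAdef, hBdef]; linarith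
  -- derivative of g on the open set Ioi (-B)
  have hderiv : ∀ y ∈ Set.Ioi (-B), deriv g y = c * ((A + y)⁻¹ - (B + y)⁻¹) := by
    intro y hy
    have hyB : 0 < B + y := by simp only [Set.mem_Ioi] at hy; linarith
    have hyA : 0 < A + y := by linarith
    have h1 : HasDerivAt (fun z => A + z) 1 y := (hasDerivAt_id y).const_add A
    have h2 : HasDerivAt (fun z => B + z) 1 y := (hasDerivAt_id y).const_add B
    have hl1 : HasDerivAt (fun z => Real.log (A + z)) ((A + y)⁻¹) y := by
      simpa [Function.comp_def] using (Real.hasDerivAt_log hyA.ne').comp y h1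
    have hl2 : HasDerivAt (fun z => Real.log (B + z)) ((B + y)⁻¹) y := by
      simpa [Function.comp_def] using (Real.hasDerivAt_log hyB.ne').comp y h2
    have hgd : HasDerivAt g (c * ((A + y)⁻¹ - (B + y)⁻¹)) y := by
      rw [hg]
      have := ((hl1.sub hl2).const_mul c)
      simpa [hAdef, hBdef, add_assoc] using this
    exact hgd.deriv
  have hxmem : x ∈ Set.Ioi (-B) := by simp only [Set.mem_Ioi]; linarith
  have heq : deriv g =ᶠ[nhds x] fun y => c * ((A + y)⁻¹ - (B + y)⁻¹) := by
    filter_upwards [isOpen_Ioi.mem_nhds hxmem] with y hy using hderiv y hy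
  have hxB : 0 < B + x := by linarith
  have hxA : 0 < A + x := by linarith
  have hd2 : deriv (deriv g) x = c * (((B + x)^2)⁻¹ - ((A + x)^2)⁻¹) := by
    rw [heq.deriv_eq]
    have h1 : HasDerivAt (fun z => A + z) 1 x := (hasDerivAt_id x).const_add A
    have h2 : HasDerivAt (fun z => B + z) 1 x := (hasDerivAt_id x).const_add B
    have hi1 : HasDerivAt (fun z => (A + z)⁻¹) (-1 / (A + x)^2) x := h1.inv hxA.ne'
    have hi2 : HasDerivAt (fun z => (B + z)⁻¹) (-1 / (B + x)^2) x := h2.inv hxB.ne'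
    rw [HasDerivAt.deriv (f := fun y => c * ((A + y)⁻¹ - (B + y)⁻¹)) ((hi1.sub hi2).const_mul c)]
    field_simp
    ring
  set u : ℝ := B + x with hu
  set v : ℝ := A + x with hv
  have hu0 : 0 < u := hxB
  have hv0 : 0 < v := hxA
  have huv : v = u + m := by rw [hu, hv, hAdef, hBdef]; ring
  have huB : B ≤ u := by rw [hu]; linarith
  have hvK : v ≤ (K:ℝ) * ((r:ℝ) + 1) := by
    rw [hv, hAdef]; nlinarith
  have huK : u ≤ v := by rw [huv]; linarith
  have hE : deriv (deriv g) x = t * ((m:ℝ) * (u + v)) / (2 * π * (u^2 * v^2)) := by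
    rw [hd2, hc, huv]
    field_simp
    ring_nf
  clear_value u v A B c
  set P : ℝ := (K:ℝ) * ((r:ℝ) + 1) with hP
  set Q : ℝ := (K:ℝ) * (r:ℝ) with hQ
  have hQu : Q ≤ u := by rw [hBdef] at huB; exact huB
  have hQ0 : 0 < Q := by rw [hBdef] at hB; exact hB
  have huv2 : u^2 * v ≤ u * v^2 := by
    calc u^2 * v = (u * v) * u := by ring
      _ ≤ (u * v) * v := mul_le_mul_of_nonneg_left huK (by positivity)
      _ = u * v^2 := by ring
  constructor
  · rw [hE, hW, div_div_eq_mul_div,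
      div_le_div_iff₀ (by positivity) (by positivity)]
    have hv3 : v^3 ≤ P^3 := pow_le_pow_left₀ hv0.le hvK 3
    have h1 : u * v^2 ≤ P^3 := by
      calc u * v^2 ≤ v * v^2 := mul_le_mul_of_nonneg_right huK (sq_nonneg v)
        _ = v^3 := by ring
        _ ≤ P^3 := hv3
    have h1' : u^2 * v ≤ P^3 := le_trans huv2 h1
    have h2 : 2 * (u^2 * v^2) ≤ (u + v) * P^3 := by
      calc 2 * (u^2 * v^2) = u * (u * v^2) + v * (u^2 * v) := by ring
        _ ≤ u * P^3 + v * P^3 :=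
            add_le_add (mul_le_mul_of_nonneg_left h1 hu0.le)
              (mul_le_mul_of_nonneg_left h1' hv0.le)
        _ = (u + v) * P^3 := by ring
    calc (m:ℝ) * t * (2 * π * (u^2 * v^2))
        = ((m:ℝ) * t * π) * (2 * (u^2 * v^2)) := by ring
      _ ≤ ((m:ℝ) * t * π) * ((u + v) * P^3) :=
          mul_le_mul_of_nonneg_left h2 (by positivity)
      _ = t * ((m:ℝ) * (u + v)) * (π * ((r:ℝ)+1)^3 * (K:ℝ)^3) := by rw [hP]; ring
  · have hRHS : ((m:ℝ)/W) * (((r:ℝ)+1)/r)^3 = (m:ℝ) * t / (π * (r:ℝ)^3 * (K:ℝ)^3) := by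
      rw [hW]; field_simp
    rw [hE, hRHS, div_le_div_iff₀ (by positivity) (by positivity)]
    have hu3 : Q^3 ≤ u^3 := pow_le_pow_left₀ hQ0.le hQu 3
    have h1 : Q^3 ≤ u^2 * v := by
      calc Q^3 ≤ u^3 := hu3
        _ = u^2 * u := by ring
        _ ≤ u^2 * v := mul_le_mul_of_nonneg_left huK (sq_nonneg u)
    have h1' : Q^3 ≤ u * v^2 := le_trans h1 huv2
    have h2 : (u + v) * Q^3 ≤ 2 * (u^2 * v^2) := by
      calc (u + v) * Q^3 = u * Q^3 + v * Q^3 := by ring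
        _ ≤ u * (u * v^2) + v * (u^2 * v) :=
            add_le_add (mul_le_mul_of_nonneg_left h1' hu0.le)
              (mul_le_mul_of_nonneg_left h1 hv0.le)
        _ = 2 * (u^2 * v^2) := by ring
    calc t * ((m:ℝ) * (u + v)) * (π * (r:ℝ)^3 * (K:ℝ)^3)
        = ((m:ℝ) * t * π) * ((u + v) * Q^3) := by rw [hQ]; ring
      _ ≤ ((m:ℝ) * t * π) * (2 * (u^2 * v^2)) :=
          mul_le_mul_of_nonneg_left h2 (by positivity)
      _ = (m:ℝ) * t * (2 * π * (u^2 * v^2)) := by ring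
end

section
/- Let f : [a,b] → ℝ have a monotonic continuous derivative on [a,b] satisfying z + U ≤ f'(x) ≤ z + V for all x ∈ [a,b], where z is an integer and 0 < U ≤ V < 1. Then |∑_{a ≤ n ≤ b} e(f(n))| ≤ (1/π)·(1/U + 1/(1−V)). -/
open Real Complex Finset

private lemma cot_anti' {x y : ℝ} (hx : 0 < x) (hxy : x ≤ y) (hy : y < π) :
    Real.cos y / Real.sin y ≤ Real.cos x / Real.sin x := by
  have hsx : 0 < Real.sin x := Real.sin_pos_of_pos_of_lt_pi hx (lt_of_le_of_lt hxy hy)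
  have hsy : 0 < Real.sin y := Real.sin_pos_of_pos_of_lt_pi (lt_of_lt_of_le hx hxy) hy
  rw [div_le_div_iff₀ hsy hsx]
  have h1 : 0 ≤ Real.sin (y - x) :=
    Real.sin_nonneg_of_nonneg_of_le_pi (by linarith) (by linarith)
  rw [Real.sin_sub] at h1
  nlinarith

private lemma half_bound' {x : ℝ} (hx : 0 < x) (hxpi : x < π) :
    1 / (2 * Real.sin x) + (Real.cos x / Real.sin x) / 2 ≤ 1 / x := by
  have hs : 0 < Real.sin x := Real.sin_pos_of_pos_of_lt_pi hx hxpi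
  have ht0 : 0 < x / 2 := by linarith
  have ht2 : x / 2 < π / 2 := by linarith
  have hct : 0 < Real.cos (x/2) := Real.cos_pos_of_mem_Ioo ⟨by linarith, ht2⟩
  have hst : 0 < Real.sin (x/2) := Real.sin_pos_of_pos_of_lt_pi ht0 (by linarith [Real.pi_pos])
  have htan := Real.lt_tan ht0 ht2
  rw [Real.tan_eq_sin_div_cos, lt_div_iff₀ hct] at htan
  have hcos : Real.cos x = 2 * Real.cos (x/2) ^ 2 - 1 := by
    have := Real.cos_two_mul (x/2); rw [show 2*(x/2) = x by ring] at this; linarith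
  have hsin : Real.sin x = 2 * Real.sin (x/2) * Real.cos (x/2) := by
    have := Real.sin_two_mul (x/2); rw [show 2*(x/2) = x by ring] at this; linarith
  have heq : 1 / (2 * Real.sin x) + (Real.cos x / Real.sin x) / 2
      = Real.cos (x/2) / (2 * Real.sin (x/2)) := by
    rw [hcos, hsin]; field_simp; ring
  rw [heq, div_le_div_iff₀ (by positivity) hx]
  nlinarith

private lemma sin_pos' {θ : ℝ} (h0 : 0 < θ) (h1 : θ < 1) : 0 < Real.sin (π * θ) :=
  Real.sin_pos_of_pos_of_lt_pi (mul_pos Real.pi_pos h0)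
    (by nlinarith [Real.pi_pos])

private lemma lemA' {U V θ : ℝ} (hU : 0 < U) (h1 : U ≤ θ) (h2 : θ ≤ V) (hV : V < 1) :
    1 / (2 * Real.sin (π * θ)) + (Real.cos (π * θ) / Real.sin (π * θ)) / 2 ≤ 1 / (π * U) := by
  have h := half_bound' (x := π * θ) (mul_pos Real.pi_pos (by linarith)) (by nlinarith [Real.pi_pos])
  have : 1 / (π * θ) ≤ 1 / (π * U) := by
    apply one_div_le_one_div_of_le (mul_pos Real.pi_pos hU)
    nlinarith [Real.pi_pos]
  linarith

private lemma lemB' {U V θ : ℝ} (hU : 0 < U) (h1 : U ≤ θ) (h2 : θ ≤ V) (hV : V < 1) :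
    1 / (2 * Real.sin (π * θ)) - (Real.cos (π * θ) / Real.sin (π * θ)) / 2 ≤ 1 / (π * (1 - V)) := by
  have h := half_bound' (x := π * (1 - θ)) (by nlinarith [Real.pi_pos]) (by nlinarith [Real.pi_pos])
  have hss : Real.sin (π * (1 - θ)) = Real.sin (π * θ) := by
    rw [show π * (1 - θ) = π - π * θ by ring, Real.sin_pi_sub]
  have hcc : Real.cos (π * (1 - θ)) = - Real.cos (π * θ) := by
    rw [show π * (1 - θ) = π - π * θ by ring, Real.cos_pi_sub]
  rw [hss, hcc] at h
  have : 1 / (π * (1 - θ)) ≤ 1 / (π * (1 - V)) := by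
    apply one_div_le_one_div_of_le (by nlinarith [Real.pi_pos])
    nlinarith [Real.pi_pos]
  have h' : 1 / (2 * Real.sin (π * θ)) + (-Real.cos (π * θ) / Real.sin (π * θ)) / 2
      ≤ 1 / (π * (1 - θ)) := h
  rw [neg_div] at h'
  linarith

private noncomputable def Hc (θ : ℝ) : ℂ :=
  -(1/2 : ℂ) - Complex.I / 2 * ((Real.cos (π * θ) / Real.sin (π * θ) : ℝ) : ℂ)

private lemma exp_eq' (θ : ℝ) :
    Complex.exp (2 * π * Complex.I * θ)
      = (1 - 2 * ((Real.sin (π * θ) : ℝ) : ℂ) ^ 2)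
        + 2 * ((Real.sin (π * θ) : ℝ) : ℂ) * ((Real.cos (π * θ) : ℝ) : ℂ) * Complex.I := by
  have h2 : (2 * π * Complex.I * (θ:ℂ)) = ((2 * (π * θ) : ℝ) : ℂ) * Complex.I := by
    push_cast; ring
  rw [h2, Complex.exp_mul_I, ← Complex.ofReal_cos, ← Complex.ofReal_sin,
    Real.cos_two_mul, Real.sin_two_mul]
  have hpC : Complex.sin ((π:ℂ) * θ) ^ 2 + Complex.cos ((π:ℂ) * θ) ^ 2 = 1 :=
    Complex.sin_sq_add_cos_sq _
  push_cast [Complex.ofReal_sin, Complex.ofReal_cos]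
  linear_combination (2 : ℂ) * hpC

private lemma Hc_mul {θ : ℝ} (h0 : 0 < θ) (h1 : θ < 1) :
    (Complex.exp (2 * π * Complex.I * θ) - 1) * Hc θ = 1 := by
  have hs : 0 < Real.sin (π * θ) := sin_pos' h0 h1
  have hsC : ((Real.sin (π * θ) : ℝ) : ℂ) ≠ 0 := by exact_mod_cast hs.ne'
  have hp := Real.sin_sq_add_cos_sq (π * θ)
  have hpC : ((Real.sin (π * θ) : ℝ) : ℂ) ^ 2 + ((Real.cos (π * θ) : ℝ) : ℂ) ^ 2 = 1 := by
    exact_mod_cast congrArg (fun r : ℝ => (r : ℂ)) hp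
  have e1 : Hc θ * (2 * ((Real.sin (π * θ) : ℝ) : ℂ))
      = -((Real.sin (π * θ) : ℝ) : ℂ) - Complex.I * ((Real.cos (π * θ) : ℝ) : ℂ) := by
    rw [Hc]
    have hd : ((Real.cos (π * θ) / Real.sin (π * θ) : ℝ) : ℂ)
        = ((Real.cos (π * θ) : ℝ) : ℂ) / ((Real.sin (π * θ) : ℝ) : ℂ) := by push_cast; ring
    rw [hd]
    have hsC'' : Complex.sin ((π:ℂ) * θ) ≠ 0 := by
      rw [show ((π:ℂ) * θ) = ((π * θ : ℝ) : ℂ) by push_cast; ring, ← Complex.ofReal_sin]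
      exact hsC
    field_simp
  have e2 : (Complex.exp (2 * π * Complex.I * θ) - 1)
        * (-((Real.sin (π * θ) : ℝ) : ℂ) - Complex.I * ((Real.cos (π * θ) : ℝ) : ℂ))
      = 2 * ((Real.sin (π * θ) : ℝ) : ℂ) := by
    rw [exp_eq']
    linear_combination (2 * ((Real.sin (π * θ) : ℝ) : ℂ)) * hpC
      - (2 * ((Real.sin (π * θ) : ℝ) : ℂ) * ((Real.cos (π * θ) : ℝ) : ℂ) ^ 2) * Complex.I_sq
  have h2s : (2 * ((Real.sin (π * θ) : ℝ) : ℂ)) ≠ 0 := by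
    simpa using hsC
  apply mul_right_cancel₀ h2s
  rw [one_mul, mul_assoc, e1, e2]

private lemma Hc_abs {θ : ℝ} (h0 : 0 < θ) (h1 : θ < 1) :
    ‖Hc θ‖ = 1 / (2 * Real.sin (π * θ)) := by
  have hs : 0 < Real.sin (π * θ) := sin_pos' h0 h1
  have hform : Hc θ = ((-(1/2) : ℝ) : ℂ)
      + ((-(Real.cos (π * θ) / Real.sin (π * θ)) / 2 : ℝ) : ℂ) * Complex.I := by
    rw [Hc]; push_cast; ring
  rw [hform, Complex.norm_add_mul_I]
  rw [show (-(1/2) : ℝ)^2 + (-(Real.cos (π * θ) / Real.sin (π * θ)) / 2)^2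
      = (1 / (2 * Real.sin (π * θ)))^2 by
    have hp := Real.sin_sq_add_cos_sq (π * θ)
    field_simp
    nlinarith]
  exact Real.sqrt_sq (by positivity)

private lemma Hc_abs_add_one {θ : ℝ} (h0 : 0 < θ) (h1 : θ < 1) :
    ‖Hc θ + 1‖ = 1 / (2 * Real.sin (π * θ)) := by
  have hs : 0 < Real.sin (π * θ) := sin_pos' h0 h1
  have hform : Hc θ + 1 = (((1/2) : ℝ) : ℂ)
      + ((-(Real.cos (π * θ) / Real.sin (π * θ)) / 2 : ℝ) : ℂ) * Complex.I := by
    rw [Hc]; push_cast; ring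
  rw [hform, Complex.norm_add_mul_I]
  rw [show ((1/2) : ℝ)^2 + (-(Real.cos (π * θ) / Real.sin (π * θ)) / 2)^2
      = (1 / (2 * Real.sin (π * θ)))^2 by
    have hp := Real.sin_sq_add_cos_sq (π * θ)
    field_simp
    nlinarith]
  exact Real.sqrt_sq (by positivity)

private lemma Hc_abs_sub (θ₁ θ₂ : ℝ) :
    ‖Hc θ₁ - Hc θ₂‖
      = |Real.cos (π * θ₁) / Real.sin (π * θ₁) - Real.cos (π * θ₂) / Real.sin (π * θ₂)| / 2 := by
  have hform : Hc θ₁ - Hc θ₂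
      = (((Real.cos (π * θ₂) / Real.sin (π * θ₂) - Real.cos (π * θ₁) / Real.sin (π * θ₁)) / 2 : ℝ) : ℂ)
        * Complex.I := by
    rw [Hc, Hc]; push_cast; ring
  rw [hform, norm_mul, Complex.norm_I, Complex.norm_real, Real.norm_eq_abs, mul_one, abs_div]
  rw [abs_sub_comm]
  simp

private lemma abel_identity (c H : ℕ → ℂ) :
    ∀ K : ℕ, (∀ j, j ≤ K → c j = (c (j+1) - c j) * H j) →
    ∑ j ∈ Finset.range (K+2), c j
      = c (K+1) * (H K + 1) - c 0 * H 0
        - ∑ j ∈ Finset.range K, c (j+1) * (H (j+1) - H j) := by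
  intro K
  induction K with
  | zero =>
    intro hstep
    simp only [Finset.sum_range_succ, Finset.sum_range_zero, Finset.range_zero]
    linear_combination hstep 0 (Nat.zero_le _)
  | succ K ih =>
    intro hstep
    have ihh := ih (fun j hj => hstep j (hj.trans (Nat.le_succ _)))
    rw [Finset.sum_range_succ, ihh, Finset.sum_range_succ]
    linear_combination hstep (K+1) le_rfl

private lemma telescope' (v : ℕ → ℝ) :
    ∀ K : ℕ, (∀ j, j < K → v (j+1) ≤ v j) →
    ∑ j ∈ Finset.range K, |v (j+1) - v j| = v 0 - v K := by
  intro K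
  induction K with
  | zero => intro _; simp
  | succ K ih =>
    intro h
    rw [Finset.sum_range_succ, ih (fun j hj => h j (Nat.lt_succ_of_lt hj))]
    rw [abs_of_nonpos (by linarith [h K (Nat.lt_succ_self K)])]
    ring

private lemma rhs_ge_one {U V : ℝ} (hU : 0 < U) (hUV : U ≤ V) (hV : V < 1) :
    1 ≤ 1 / (π * U) + 1 / (π * (1 - V)) := by
  have h1V : 0 < 1 - V := by linarith
  have hpi : 0 < π := Real.pi_pos
  have hpi4 : π < 4 := by nlinarith [Real.pi_lt_d2]
  have h4 : 4 * (U * (1 - V)) ≤ U + (1 - V) := by nlinarith [sq_nonneg (U - (1 - V)), hUV]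
  have e1 : 1 / (π * U) + 1 / (π * (1 - V)) = (U + (1 - V)) / (π * (U * (1 - V))) := by
    field_simp; ring
  rw [e1, le_div_iff₀ (by positivity)]
  nlinarith

private lemma key_bound (U V : ℝ) (hU : 0 < U) (hUV : U ≤ V) (hV : V < 1)
    (K : ℕ) (c : ℕ → ℂ) (θ : ℕ → ℝ)
    (habs : ∀ j, j ≤ K → ‖c j‖ = 1)
    (hstep : ∀ j, j < K → c (j+1) = c j * Complex.exp (2 * π * Complex.I * (θ j)))
    (hrange : ∀ j, j < K → U ≤ θ j ∧ θ j ≤ V)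
    (hmono : (∀ i j, i ≤ j → j < K → θ i ≤ θ j) ∨ (∀ i j, i ≤ j → j < K → θ j ≤ θ i)) :
    ‖∑ j ∈ Finset.range (K+1), c j‖ ≤ 1 / (π * U) + 1 / (π * (1 - V)) := by
  cases K with
  | zero =>
    have h1 := habs 0 le_rfl
    simpa [h1] using rhs_ge_one hU hUV hV
  | succ K =>
    have hθ : ∀ j, j < K + 1 → 0 < θ j ∧ θ j < 1 := fun j hj =>
      ⟨lt_of_lt_of_le hU (hrange j hj).1, lt_of_le_of_lt (hrange j hj).2 hV⟩
    have hstep' : ∀ j, j ≤ K → c j = (c (j+1) - c j) * Hc (θ j) := by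
      intro j hj
      have hj' : j < K + 1 := Nat.lt_succ_of_le hj
      have h1 := hstep j hj'
      have h2 := Hc_mul (hθ j hj').1 (hθ j hj').2
      linear_combination (-(Hc (θ j))) * h1 - (c j) * h2
    have identity := abel_identity c (fun j => Hc (θ j)) K hstep'
    rw [identity]
    have t1 : ∀ x y : ℂ, ‖x - y‖ ≤ ‖x‖ + ‖y‖ := fun x y => by
      simpa [sub_eq_add_neg] using norm_add_le x (-y)
    have tri : ‖c (K+1) * (Hc (θ K) + 1) - c 0 * Hc (θ 0)
          - ∑ j ∈ Finset.range K, c (j+1) * (Hc (θ (j+1)) - Hc (θ j))‖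
        ≤ ‖c (K+1) * (Hc (θ K) + 1)‖ + ‖c 0 * Hc (θ 0)‖
          + ‖∑ j ∈ Finset.range K, c (j+1) * (Hc (θ (j+1)) - Hc (θ j))‖ := by
      have a1 := t1 (c (K+1) * (Hc (θ K) + 1) - c 0 * Hc (θ 0))
        (∑ j ∈ Finset.range K, c (j+1) * (Hc (θ (j+1)) - Hc (θ j)))
      have a2 := t1 (c (K+1) * (Hc (θ K) + 1)) (c 0 * Hc (θ 0))
      linarith
    have hKlt : K < K + 1 := Nat.lt_succ_self K
    have h0lt : 0 < K + 1 := Nat.succ_pos K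
    have e1 : ‖c (K+1) * (Hc (θ K) + 1)‖ = 1 / (2 * Real.sin (π * θ K)) := by
      rw [norm_mul, habs (K+1) le_rfl, Hc_abs_add_one (hθ K hKlt).1 (hθ K hKlt).2, one_mul]
    have e2 : ‖c 0 * Hc (θ 0)‖ = 1 / (2 * Real.sin (π * θ 0)) := by
      rw [norm_mul, habs 0 (Nat.zero_le _), Hc_abs (hθ 0 h0lt).1 (hθ 0 h0lt).2, one_mul]
    have e3 : ‖∑ j ∈ Finset.range K, c (j+1) * (Hc (θ (j+1)) - Hc (θ j))‖
        ≤ ∑ j ∈ Finset.range K,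
            |Real.cos (π * θ (j+1)) / Real.sin (π * θ (j+1))
              - Real.cos (π * θ j) / Real.sin (π * θ j)| / 2 := by
      refine (norm_sum_le _ _).trans (Finset.sum_le_sum fun j hj => ?_)
      rw [norm_mul, habs (j+1) (by simp at hj; omega), one_mul, Hc_abs_sub]
    rcases hmono with hm | hm
    · have hw : ∀ j, j < K →
          Real.cos (π * θ (j+1)) / Real.sin (π * θ (j+1))
            ≤ Real.cos (π * θ j) / Real.sin (π * θ j) := by
        intro j hj
        have hj1 : j < K + 1 := Nat.lt_succ_of_lt hj
        have hj2 : j + 1 < K + 1 := Nat.succ_lt_succ hj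
        exact cot_anti' (mul_pos Real.pi_pos (hθ j hj1).1)
          (by nlinarith [Real.pi_pos, hm j (j+1) (Nat.le_succ j) hj2])
          (by nlinarith [Real.pi_pos, (hθ (j+1) hj2).2])
      have tel := telescope' (fun j => Real.cos (π * θ j) / Real.sin (π * θ j)) K hw
      have sum_half : ∑ j ∈ Finset.range K,
            |Real.cos (π * θ (j+1)) / Real.sin (π * θ (j+1))
              - Real.cos (π * θ j) / Real.sin (π * θ j)| / 2
          = (Real.cos (π * θ 0) / Real.sin (π * θ 0)
              - Real.cos (π * θ K) / Real.sin (π * θ K)) / 2 := by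
        rw [← Finset.sum_div, tel]
      have bA := lemA' hU (hrange 0 h0lt).1 (hrange 0 h0lt).2 hV
      have bB := lemB' hU (hrange K hKlt).1 (hrange K hKlt).2 hV
      rw [sum_half] at e3
      linarith
    · have hw : ∀ j, j < K →
          -(Real.cos (π * θ (j+1)) / Real.sin (π * θ (j+1)))
            ≤ -(Real.cos (π * θ j) / Real.sin (π * θ j)) := by
        intro j hj
        have hj1 : j < K + 1 := Nat.lt_succ_of_lt hj
        have hj2 : j + 1 < K + 1 := Nat.succ_lt_succ hj
        have := cot_anti' (x := π * θ (j+1)) (y := π * θ j)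
          (mul_pos Real.pi_pos (hθ (j+1) hj2).1)
          (by nlinarith [Real.pi_pos, hm j (j+1) (Nat.le_succ j) hj2])
          (by nlinarith [Real.pi_pos, (hθ j hj1).2])
        linarith
      have tel := telescope' (fun j => -(Real.cos (π * θ j) / Real.sin (π * θ j))) K hw
      simp only [neg_sub_neg] at tel
      have sum_half : ∑ j ∈ Finset.range K,
            |Real.cos (π * θ (j+1)) / Real.sin (π * θ (j+1))
              - Real.cos (π * θ j) / Real.sin (π * θ j)| / 2
          = (Real.cos (π * θ K) / Real.sin (π * θ K)
              - Real.cos (π * θ 0) / Real.sin (π * θ 0)) / 2 := by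
        have tel2 : ∑ j ∈ Finset.range K,
            |Real.cos (π * θ (j+1)) / Real.sin (π * θ (j+1))
              - Real.cos (π * θ j) / Real.sin (π * θ j)|
            = Real.cos (π * θ K) / Real.sin (π * θ K)
              - Real.cos (π * θ 0) / Real.sin (π * θ 0) := by
          rw [← tel]
          exact Finset.sum_congr rfl fun j _ => abs_sub_comm _ _
        rw [← Finset.sum_div, tel2]
      have bA := lemA' hU (hrange K hKlt).1 (hrange K hKlt).2 hV
      have bB := lemB' hU (hrange 0 h0lt).1 (hrange 0 h0lt).2 hV
      rw [sum_half] at e3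
      linarith

private lemma sum_Icc_int (g : ℤ → ℂ) (M : ℤ) :
    ∀ N : ℤ, M ≤ N →
      ∑ n ∈ Finset.Icc M N, g n = ∑ j ∈ Finset.range ((N - M).toNat + 1), g (M + j) := by
  refine Int.le_induction ?_ ?_
  · simp
  · intro N hMN ih
    have hins : Finset.Icc M (N + 1) = insert (N + 1) (Finset.Icc M N) := by
      ext x
      simp only [Finset.mem_Icc, Finset.mem_insert]
      omega
    have hnotmem : (N + 1) ∉ Finset.Icc M N := by
      simp only [Finset.mem_Icc]; omega
    rw [hins, Finset.sum_insert hnotmem, ih]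
    have htn : (N + 1 - M).toNat = (N - M).toNat + 1 := by omega
    rw [htn]
    conv_rhs => rw [Finset.sum_range_succ]
    have hcast : M + ((((N - M).toNat + 1 : ℕ)) : ℤ) = N + 1 := by omega
    rw [hcast]
    ring

theorem stmt_14 (a b : ℝ) (hab : a ≤ b) (f f' : ℝ → ℝ)
    (hderiv : ∀ x ∈ Set.Icc a b, HasDerivAt f (f' x) x)
    (hcont : ContinuousOn f' (Set.Icc a b))
    (hmono : MonotoneOn f' (Set.Icc a b) ∨ AntitoneOn f' (Set.Icc a b))
    (z : ℤ) (U V : ℝ) (hU : 0 < U) (hUV : U ≤ V) (hV : V < 1)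
    (hbound : ∀ x ∈ Set.Icc a b, z + U ≤ f' x ∧ f' x ≤ z + V) :
    ‖∑ n ∈ Finset.Icc ⌈a⌉ ⌊b⌋, Complex.exp (2 * π * Complex.I * (f n))‖
      ≤ (1 / π) * (1 / U + 1 / (1 - V)) := by
  have hpi : 0 < π := Real.pi_pos
  have h1V : 0 < 1 - V := by linarith
  have hRHSeq : (1 / π) * (1 / U + 1 / (1 - V)) = 1 / (π * U) + 1 / (π * (1 - V)) := by
    field_simp
  set M : ℤ := ⌈a⌉ with hM
  set N : ℤ := ⌊b⌋ with hN
  rcases lt_or_ge N M with hlt | hle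
  · rw [Finset.Icc_eq_empty (not_le.mpr hlt)]
    simp only [Finset.sum_empty, norm_zero]
    rw [hRHSeq]
    positivity
  · have haM : a ≤ (M : ℝ) := Int.le_ceil a
    have hNb : (N : ℝ) ≤ b := Int.floor_le b
    set K : ℕ := (N - M).toNat with hK
    have hKcast : (K : ℤ) = N - M := Int.toNat_of_nonneg (by omega)
    rw [sum_Icc_int _ M N hle]
    simp only [Int.cast_add, Int.cast_natCast]
    rw [hRHSeq]
    have hsub : ∀ j : ℕ, j < K →
        Set.Icc ((M:ℝ) + j) ((M:ℝ) + j + 1) ⊆ Set.Icc a b := by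
      intro j hj x hx
      have hj1 : (j : ℤ) + 1 ≤ (K : ℤ) := by exact_mod_cast hj
      have hMN : M + (j : ℤ) + 1 ≤ N := by omega
      have hle2 : ((M : ℝ) + j + 1) ≤ (N : ℝ) := by exact_mod_cast hMN
      have hj0 : (0:ℝ) ≤ (j : ℝ) := Nat.cast_nonneg j
      exact ⟨by linarith [hx.1], by linarith [hx.2]⟩
    have hMVT : ∀ j : ℕ, ∃ x : ℝ, j < K →
        x ∈ Set.Icc a b ∧ ((M:ℝ) + j < x ∧ x < (M:ℝ) + j + 1)
          ∧ f' x = f ((M:ℝ) + j + 1) - f ((M:ℝ) + j) := by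
      intro j
      by_cases hj : j < K
      · have hlt' : (M:ℝ) + j < (M:ℝ) + j + 1 := by linarith
        have hcont' : ContinuousOn f (Set.Icc ((M:ℝ) + j) ((M:ℝ) + j + 1)) := fun x hx =>
          ((hderiv x (hsub j hj hx)).continuousAt).continuousWithinAt
        have hderiv' : ∀ x ∈ Set.Ioo ((M:ℝ) + j) ((M:ℝ) + j + 1), HasDerivAt f (f' x) x :=
          fun x hx => hderiv x (hsub j hj (Set.mem_Icc_of_Ioo hx))
        obtain ⟨x, hx, hfx⟩ := exists_hasDerivAt_eq_slope f f' hlt' hcont' hderiv'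
        refine ⟨x, fun _ => ⟨hsub j hj (Set.mem_Icc_of_Ioo hx), ⟨hx.1, hx.2⟩, ?_⟩⟩
        rw [hfx, show (M:ℝ) + j + 1 - ((M:ℝ) + j) = 1 by ring, div_one]
      · exact ⟨a, fun h => absurd h hj⟩
    choose ξ hξ using hMVT
    have hθmem : ∀ j : ℕ, j < K → U ≤ f' (ξ j) - z ∧ f' (ξ j) - z ≤ V := by
      intro j hj
      have h := hbound (ξ j) (hξ j hj).1
      constructor <;> linarith [h.1, h.2]
    refine key_bound U V hU hUV hV K
      (fun j => Complex.exp (2 * π * Complex.I * (f ((M:ℝ) + j))))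
      (fun j => f' (ξ j) - z) ?_ ?_ ?_ ?_
    · intro j _
      rw [show (2 * (π:ℂ) * Complex.I * ((f ((M:ℝ) + j) : ℝ) : ℂ))
          = (((2 * π * f ((M:ℝ) + j)) : ℝ) : ℂ) * Complex.I by push_cast; ring]
      exact Complex.norm_exp_ofReal_mul_I _
    · intro j hj
      obtain ⟨hmem, hIoo, hslope⟩ := hξ j hj
      have hslopeC : ((f' (ξ j) : ℝ) : ℂ)
          = ((f ((M:ℝ) + j + 1) : ℝ) : ℂ) - ((f ((M:ℝ) + j) : ℝ) : ℂ) := by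
        exact_mod_cast congrArg (fun r : ℝ => (r : ℂ)) hslope
      have hcastj : ((M:ℝ) + ((j + 1 : ℕ) : ℝ)) = (M:ℝ) + j + 1 := by push_cast; ring
      rw [hcastj]
      have key : (2 * (π:ℂ) * Complex.I * ((f ((M:ℝ) + j + 1) : ℝ) : ℂ))
          = 2 * (π:ℂ) * Complex.I * ((f ((M:ℝ) + j) : ℝ) : ℂ)
            + 2 * (π:ℂ) * Complex.I * (((f' (ξ j) - z : ℝ)) : ℂ)
            + (z : ℂ) * (2 * (π:ℂ) * Complex.I) := by
        push_cast at hslopeC ⊢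
        linear_combination (-2 * (π:ℂ) * Complex.I) * hslopeC
      rw [key, Complex.exp_add, Complex.exp_add, Complex.exp_int_mul_two_pi_mul_I, mul_one]
    · exact hθmem
    · rcases hmono with hm | hm
      · left
        intro i j hij hjK
        rcases eq_or_lt_of_le hij with rfl | hlt'
        · exact le_rfl
        · have hiK : i < K := lt_trans hlt' hjK
          have h1 : ξ i < (M:ℝ) + i + 1 := (hξ i hiK).2.1.2
          have h2 : (M:ℝ) + j < ξ j := (hξ j hjK).2.1.1
          have h3 : ((i:ℝ) + 1) ≤ (j : ℝ) := by exact_mod_cast hlt'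
          have h4 : ξ i ≤ ξ j := by linarith
          have := hm (hξ i hiK).1 (hξ j hjK).1 h4
          linarith
      · right
        intro i j hij hjK
        rcases eq_or_lt_of_le hij with rfl | hlt'
        · exact le_rfl
        · have hiK : i < K := lt_trans hlt' hjK
          have h1 : ξ i < (M:ℝ) + i + 1 := (hξ i hiK).2.1.2
          have h2 : (M:ℝ) + j < ξ j := (hξ j hjK).2.1.1
          have h3 : ((i:ℝ) + 1) ≤ (j : ℝ) := by exact_mod_cast hlt'
          have h4 : ξ i ≤ ξ j := by linarith
          have := hm (hξ i hiK).1 (hξ j hjK).1 h4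
          linarith
end

section
/- Let t ≥ 5·10^6, φ ∈ [1/3, 0.35], K = ⌈t^φ⌉, n₁ = ⌊√(t/(2π))⌋, R = ⌊n₁/K⌋, and 4 ≤ r ≤ R. Let W = π(r+1)³K³/t and let 0 < c < 3, M = ⌈c·W^(1/3)⌉. Then M ≤ K − 1. -/
open Real

theorem stmt_16 (t φ : ℝ) (ht : 5e6 ≤ t) (hφ1 : 1 / 3 ≤ φ) (hφ2 : φ ≤ 0.35)
    (K n₁ R : ℤ) (hK : K = ⌈t ^ φ⌉) (hn₁ : n₁ = ⌊Real.sqrt (t / (2 * π))⌋)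
    (hR : R = ⌊((n₁ : ℝ) / (K : ℝ))⌋)
    (r : ℤ) (hr1 : 4 ≤ r) (hr2 : r ≤ R)
    (W : ℝ) (hW : W = π * ((r : ℝ) + 1) ^ 3 * (K : ℝ) ^ 3 / t)
    (c : ℝ) (hc0 : 0 < c) (hc3 : c < 3)
    (M : ℤ) (hM : M = ⌈c * W ^ ((1 : ℝ) / 3)⌉) :
    M ≤ K - 1 := by
  have ht0 : (0:ℝ) < t := by linarith
  have ht1 : (1:ℝ) ≤ t := by linarith
  have hπ0 : (0:ℝ) < π := Real.pi_pos
  -- u = t^{1/6}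
  set u : ℝ := t ^ ((1:ℝ)/6) with hu_def
  have hu0 : 0 < u := Real.rpow_pos_of_pos ht0 _
  have hu6 : u ^ (6:ℕ) = t := by
    rw [hu_def, ← Real.rpow_natCast (t ^ ((1:ℝ)/6)) 6, ← Real.rpow_mul ht0.le]
    norm_num
  have hu13 : (13:ℝ) ≤ u := by
    refine le_of_pow_le_pow_left₀ (n := 6) (by norm_num) hu0.le ?_
    rw [hu6]; linarith
  -- p = π^{1/3}
  set p : ℝ := π ^ ((1:ℝ)/3) with hp_def
  have hp0 : 0 < p := Real.rpow_pos_of_pos hπ0 _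
  have hp3 : p ^ (3:ℕ) = π := by
    rw [hp_def, ← Real.rpow_natCast (π ^ ((1:ℝ)/3)) 3, ← Real.rpow_mul hπ0.le]
    norm_num
  have hp147 : p ≤ (147/100:ℝ) := by
    refine le_of_pow_le_pow_left₀ (n := 3) (by norm_num) (by norm_num) ?_
    rw [hp3]
    nlinarith [Real.pi_lt_d2]
  -- K bounds
  have hKt : t ^ ((1:ℝ)/3) ≤ (K:ℝ) := by
    rw [hK]
    exact le_trans (Real.rpow_le_rpow_of_exponent_le ht1 hφ1) (Int.le_ceil _)
  have hKu2 : u ^ 2 ≤ (K:ℝ) := by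
    have : t ^ ((1:ℝ)/3) = u ^ 2 := by
      rw [hu_def, ← Real.rpow_natCast (t ^ ((1:ℝ)/6)) 2, ← Real.rpow_mul ht0.le]
      norm_num
    linarith [hKt, this.symm.le, this.le]
  have hu2 : (0:ℝ) < u ^ 2 := by positivity
  have hK0 : (0:ℝ) < (K:ℝ) := lt_of_lt_of_le hu2 hKu2
  -- r*K ≤ n₁
  have hrR : (r:ℝ) ≤ (n₁:ℝ) / (K:ℝ) := by
    have h1 : (r:ℝ) ≤ (R:ℝ) := by exact_mod_cast hr2
    have h2 : (R:ℝ) ≤ (n₁:ℝ) / (K:ℝ) := by rw [hR]; exact Int.floor_le _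
    linarith
  have hrK : (r:ℝ) * (K:ℝ) ≤ (n₁:ℝ) := (le_div_iff₀ hK0).mp hrR
  -- n₁ ≤ √(t/2π) ≤ u³/(5/2:ℝ)
  have hn1sqrt : (n₁:ℝ) ≤ Real.sqrt (t / (2*π)) := by rw [hn₁]; exact Int.floor_le _
  have hsqrt : Real.sqrt (t / (2*π)) ≤ u ^ 3 / (5/2:ℝ) := by
    have h2π : (0:ℝ) < 2*π := by linarith
    set s : ℝ := (2*π) ^ ((1:ℝ)/2) with hs_def
    have hs0 : 0 < s := Real.rpow_pos_of_pos h2π _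
    have hs2 : s ^ (2:ℕ) = 2*π := by
      rw [hs_def, ← Real.rpow_natCast ((2*π) ^ ((1:ℝ)/2)) 2, ← Real.rpow_mul h2π.le]
      norm_num
    have hs25 : ((5/2:ℝ):ℝ) ≤ s := by
      refine le_of_pow_le_pow_left₀ (n := 2) (by norm_num) hs0.le ?_
      rw [hs2]
      nlinarith [Real.pi_gt_d6]
    have hth : t ^ ((1:ℝ)/2) = u ^ 3 := by
      rw [hu_def, ← Real.rpow_natCast (t ^ ((1:ℝ)/6)) 3, ← Real.rpow_mul ht0.le]
      norm_num
    have : Real.sqrt (t / (2*π)) = t ^ ((1:ℝ)/2) / s := by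
      rw [Real.sqrt_eq_rpow, Real.div_rpow ht0.le h2π.le, hs_def]
    rw [this, hth]
    have hu3 : (0:ℝ) ≤ u ^ 3 := by positivity
    calc u ^ 3 / s ≤ u ^ 3 / (5/2:ℝ) := by
          apply div_le_div_of_nonneg_left hu3 (by norm_num) hs25
      _ = u ^ 3 / (5/2:ℝ) := rfl
  have hrKu : (r:ℝ) * (K:ℝ) ≤ u ^ 3 / (5/2:ℝ) := le_trans hrK (le_trans hn1sqrt hsqrt)
  -- B = W^{1/3}
  set B : ℝ := p * (((r:ℝ) + 1) * (K:ℝ)) / u ^ 2 with hB_def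
  have hr4 : (4:ℝ) ≤ (r:ℝ) := by exact_mod_cast hr1
  have hB0 : 0 ≤ B := by
    rw [hB_def]
    positivity
  have hu6' : (u ^ 2) ^ (3:ℕ) = t := by rw [← pow_mul]; exact hu6
  have hB3 : B ^ (3:ℕ) = W := by
    have h1 : B ^ (3:ℕ) = p ^ (3:ℕ) * ((((r:ℝ) + 1)) ^ 3 * (K:ℝ) ^ 3) / (u ^ 2) ^ (3:ℕ) := by
      rw [hB_def]; ring
    rw [h1, hp3, hu6', hW]; ring
  have hWB : W ^ ((1:ℝ)/3) = B := by
    rw [← hB3, ← Real.rpow_natCast B 3, ← Real.rpow_mul hB0]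
    norm_num
  -- reduce goal
  rw [hM, Int.ceil_le]
  push_cast
  rw [hWB]
  -- now c * B ≤ K - 1
  have hcB : c * B ≤ 3 * B := mul_le_mul_of_nonneg_right hc3.le hB0
  have hBu : B * u ^ 2 = p * (((r:ℝ) + 1) * (K:ℝ)) := by
    rw [hB_def]; field_simp
  -- key arithmetic
  have f1 : (K:ℝ) * u ^ 2 ≥ 13 * u ^ 3 := by
    calc (K:ℝ) * u ^ 2 ≥ u ^ 2 * u ^ 2 := mul_le_mul_of_nonneg_right hKu2 hu2.le
      _ = u * u ^ 3 := by ring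
      _ ≥ 13 * u ^ 3 := mul_le_mul_of_nonneg_right hu13 (by positivity)
  have hu169 : (169:ℝ) ≤ u ^ 2 := by
    calc (169:ℝ) = 13 * 13 := by norm_num
      _ ≤ u * u := mul_le_mul hu13 hu13 (by norm_num) hu0.le
      _ = u ^ 2 := (sq u).symm
  have f2 : (K:ℝ) * u ^ 2 ≥ 169 * (K:ℝ) := by
    calc (K:ℝ) * u ^ 2 = u ^ 2 * (K:ℝ) := by ring
      _ ≥ 169 * (K:ℝ) := mul_le_mul_of_nonneg_right hu169 hK0.le
  have f3 : (K:ℝ) * u ^ 2 ≥ 169 * u ^ 2 :=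
    mul_le_mul_of_nonneg_right (le_trans hu169 hKu2) hu2.le
  have key : 3 * B * u ^ 2 ≤ ((K:ℝ) - 1) * u ^ 2 := by
    have h3B : 3 * B * u ^ 2 = 3 * (p * (((r:ℝ) + 1) * (K:ℝ))) := by
      rw [← hBu]; ring
    have hprK : p * (((r:ℝ) + 1) * (K:ℝ)) ≤ (147/100:ℝ) * (u ^ 3 / (5/2:ℝ) + (K:ℝ)) := by
      have h1 : ((r:ℝ) + 1) * (K:ℝ) ≤ u ^ 3 / (5/2:ℝ) + (K:ℝ) := by
        have e : ((r:ℝ) + 1) * (K:ℝ) = (r:ℝ) * (K:ℝ) + (K:ℝ) := by ring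
        rw [e]; linarith [hrKu]
      have h2 : 0 ≤ ((r:ℝ) + 1) * (K:ℝ) := by positivity
      calc p * (((r:ℝ) + 1) * (K:ℝ)) ≤ (147/100:ℝ) * (((r:ℝ) + 1) * (K:ℝ)) :=
            mul_le_mul_of_nonneg_right hp147 h2
        _ ≤ (147/100:ℝ) * (u ^ 3 / (5/2:ℝ) + (K:ℝ)) := by linarith
    rw [h3B]
    linarith [f1, f2, f3, hu2, hprK]
  have h3B' : 3 * B ≤ (K:ℝ) - 1 := by
    have := (mul_le_mul_iff_of_pos_right hu2).mp key
    linarith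
  linarith
end
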